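/- For an autonomous evolutionary system E, the weak global attractor A_w and the weak pullback attractor A_w(t) both exist and A_w = A_w(t) for every t ∈ ℝ. Moreover, the strong global attractor A_s exists if and only if the strong pullback attractor A_s(t) exists, in which case A_s = A_s(t) for every t. -/

import Mathlib

open Filter Topology MeasureTheory

variable {X : Type*}

/-- Convergence of a sequence with respect to a distance function `d`. -/
def Conv (d : X → X → ℝ) (u : ℕ → X) (x : X) : Prop :=
  ∀ ε > 0, ∃ N, ∀ n ≥ N, d (u n) x < ε

/-- The `d`-distance between two paired sequences tends to zero. -/
def DistTendsZero (d : X → X → ℝ) (u v : ℕ → X) : Prop :=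
  ∀ ε > 0, ∃ N, ∀ n ≥ N, d (u n) (v n) < ε

/-- Sequential closure of a set with respect to the distance `d`. -/
def SeqClosure (d : X → X → ℝ) (A : Set X) : Set X :=
  {x | ∃ u : ℕ → X, (∀ n, u n ∈ A) ∧ Conv d u x}

/-- Sequential closedness with respect to the distance `d`. -/
def SeqClosed (d : X → X → ℝ) (A : Set X) : Prop :=
  SeqClosure d A ⊆ A

/-- Sequential compactness of a set with respect to the distance `d`. -/
def SeqCompactIn (d : X → X → ℝ) (A : Set X) : Prop :=
  ∀ u : ℕ → X, (∀ n, u n ∈ A) →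
    ∃ x ∈ A, ∃ φ : ℕ → ℕ, StrictMono φ ∧ Conv d (u ∘ φ) x

/-- `d` is a metric on `X`. -/
def IsMetric (d : X → X → ℝ) : Prop :=
  (∀ x y, 0 ≤ d x y) ∧ (∀ x y, d x y = 0 ↔ x = y) ∧ (∀ x y, d x y = d y x) ∧
  (∀ x y z, d x z ≤ d x y + d y z)

/-- Uniform convergence of trajectories on each compact subinterval `[s,T]`,
i.e. convergence in `C([s,∞);X)` with distance `d` on `X`. -/
def ConvTraj (d : X → X → ℝ) (s : ℝ) (u : ℕ → ℝ → X) (v : ℝ → X) : Prop :=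
  ∀ T : ℝ, ∀ ε > 0, ∃ N, ∀ n ≥ N, ∀ r ∈ Set.Icc s T, d (u n r) (v r) < ε

/-- A generalized evolutionary system: to each interval `[s,∞)` it assigns a
nonempty set of trajectories (encoded as functions `ℝ → X`, only the values on
`[s,∞)` being relevant), closed under restriction to later starting times. -/
structure GES (X : Type*) where
  traj : ℝ → Set (ℝ → X)
  nonempty : ∀ s : ℝ, (traj s).Nonempty
  mono : ∀ ⦃s s' : ℝ⦄, s ≤ s' → traj s ⊆ traj s'

namespace GES

variable (E : GES X)

/-- Complete trajectories: those whose restriction to every `[T,∞)` is a trajectory. -/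
def complete : Set (ℝ → X) := {u | ∀ T : ℝ, u ∈ E.traj T}

/-- `P(t,s)A = {u(t) : u ∈ E([s,∞)), u(s) ∈ A}`. -/
def P (t s : ℝ) (A : Set X) : Set X :=
  {x | ∃ u ∈ E.traj s, u s ∈ A ∧ u t = x}

/-- `P̃(t,s)A = {u(t) : u ∈ E((-∞,∞)), u(s) ∈ A}`. -/
def Ptil (t s : ℝ) (A : Set X) : Set X :=
  {x | ∃ u ∈ E.complete, u s ∈ A ∧ u t = x}

/-- The pullback omega-limit `Ω_d(A,t) = ⋂_{s≤t} cl_d(⋃_{r≤s} P(t,r)A)`. -/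
def Omega (d : X → X → ℝ) (A : Set X) (t : ℝ) : Set X :=
  ⋂ s ∈ Set.Iic t, SeqClosure d (⋃ r ∈ Set.Iic s, E.P t r A)

/-- The family `Afam` pullback attracts the set `B` in the metric `d`. -/
def PullbackAttracts (d : X → X → ℝ) (Afam : ℝ → Set X) (B : Set X) : Prop :=
  ∀ t : ℝ, ∀ ε > 0, ∃ s0 ≤ t, ∀ s ≤ s0, ∀ x ∈ E.P t s B, ∃ a ∈ Afam t, d x a < ε

/-- The `d`-pullback attractor: a family of `d`-closed, `d`-pullback attracting
sets which is minimal with respect to these properties. -/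
def IsPullbackAttractor (d : X → X → ℝ) (Afam : ℝ → Set X) : Prop :=
  (∀ t, SeqClosed d (Afam t)) ∧ E.PullbackAttracts d Afam Set.univ ∧
  ∀ B : ℝ → Set X, (∀ t, SeqClosed d (B t)) → E.PullbackAttracts d B Set.univ →
    ∀ t, Afam t ⊆ B t

/-- Pullback asymptotic compactness with respect to `d`. -/
def PullbackAsympCompact (d : X → X → ℝ) : Prop :=
  ∀ t : ℝ, ∀ s : ℕ → ℝ, (∀ n, s n ≤ t) → Tendsto s atTop atBot →
    ∀ x : ℕ → X, (∀ n, x n ∈ E.P t (s n) Set.univ) →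
      ∃ y : X, ∃ φ : ℕ → ℕ, StrictMono φ ∧ Conv d (x ∘ φ) y

/-- Pullback semi-invariance. -/
def PBSemiInv (B : ℝ → Set X) : Prop :=
  ∀ ⦃s t : ℝ⦄, s ≤ t → E.Ptil t s (B s) ⊆ B t

/-- Pullback invariance. -/
def PBInv (B : ℝ → Set X) : Prop :=
  ∀ ⦃s t : ℝ⦄, s ≤ t → E.Ptil t s (B s) = B t

/-- Pullback quasi-invariance. -/
def PBQuasiInv (B : ℝ → Set X) : Prop :=
  ∀ t : ℝ, ∀ b ∈ B t, ∃ u ∈ E.complete, u t = b ∧ ∀ s ≤ t, u s ∈ B s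

/-- Condition A1: `E([s,∞))` is compact in `C([s,∞);X_w)` for each `s`. -/
def A1 (d : X → X → ℝ) : Prop :=
  ∀ s : ℝ, ∀ u : ℕ → ℝ → X, (∀ n, u n ∈ E.traj s) →
    ∃ v ∈ E.traj s, ∃ φ : ℕ → ℕ, StrictMono φ ∧ ConvTraj d s (fun n => u (φ n)) v

end GES

/-- The system is autonomous (time-shift property of the trajectory spaces). -/
def Autonomous {X : Type*} (E : GES X) : Prop :=
  ∀ τ s : ℝ, ∀ u : ℝ → X, u ∈ E.traj (τ + s) ↔ (fun r => u (r + s)) ∈ E.traj τ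

/-- `Aset` `d`-attracts every subset of `X` forward in time:
for all `B ⊆ X` and `ε>0` there is `t0` with `R(t)B ⊆ B_d(Aset,ε)` for `t ≥ t0`,
where `R(t)B = P(t,0)B`. -/
def AttractsAll {X : Type*} (E : GES X) (d : X → X → ℝ) (Aset : Set X) : Prop :=
  ∀ B : Set X, ∀ ε > (0 : ℝ), ∃ t0 : ℝ, ∀ t ≥ t0, ∀ x ∈ E.P t 0 B,
    ∃ a ∈ Aset, d x a < ε

/-- The `d`-global attractor: a minimal `d`-closed `d`-attracting set. -/
def IsGlobalAttractor {X : Type*} (E : GES X) (d : X → X → ℝ) (Aset : Set X) : Prop :=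
  SeqClosed d Aset ∧ AttractsAll E d Aset ∧
  ∀ B : Set X, SeqClosed d B → AttractsAll E d B → Aset ⊆ B

section Aux

variable {X : Type*}

lemma seqClosure_mono' (d : X → X → ℝ) {A B : Set X} (h : A ⊆ B) :
    SeqClosure d A ⊆ SeqClosure d B := by
  rintro x ⟨u, hu, hc⟩
  exact ⟨u, fun n => h (hu n), hc⟩

lemma mem_of_approx {d : X → X → ℝ} (hd : IsMetric d) {B : Set X} (hB : SeqClosed d B)
    {y : X} (h : ∀ ε > (0:ℝ), ∃ a ∈ B, d y a < ε) : y ∈ B := by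
  have hch : ∀ n : ℕ, ∃ a ∈ B, d y a < 1 / (n + 1) := by
    intro n
    exact h _ (by positivity)
  choose a ha hlt using hch
  apply hB
  refine ⟨a, ha, ?_⟩
  intro ε hε
  obtain ⟨N, hN⟩ := exists_nat_one_div_lt hε
  refine ⟨N, fun n hn => ?_⟩
  have h1 : (1 : ℝ) / (n + 1) ≤ 1 / (N + 1) := by
    apply one_div_le_one_div_of_le (by positivity)
    exact_mod_cast by exact_mod_cast Nat.add_le_add_right hn 1
  calc d (a n) y = d y (a n) := hd.2.2.1 _ _
    _ < 1 / (n + 1) := hlt n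
    _ ≤ 1 / (N + 1) := h1
    _ < ε := hN

lemma seqClosed_seqClosure {d : X → X → ℝ} (hd : IsMetric d) (A : Set X) :
    SeqClosed d (SeqClosure d A) := by
  rintro x ⟨u, hu, hc⟩
  have hw : ∀ n : ℕ, ∃ w ∈ A, d w (u n) < 1 / (n + 1) := by
    intro n
    obtain ⟨v, hv, hvc⟩ := hu n
    obtain ⟨N, hN⟩ := hvc (1 / (n + 1)) (by positivity)
    exact ⟨v N, hv N, hN N le_rfl⟩
  choose w hw hwlt using hw
  refine ⟨w, hw, ?_⟩
  intro ε hε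
  obtain ⟨N1, hN1⟩ := exists_nat_one_div_lt (half_pos hε)
  obtain ⟨N2, hN2⟩ := hc (ε / 2) (half_pos hε)
  refine ⟨max N1 N2, fun n hn => ?_⟩
  have h1 : (1 : ℝ) / (n + 1) ≤ 1 / (N1 + 1) := by
    apply one_div_le_one_div_of_le (by positivity)
    have : (N1 : ℝ) ≤ (n : ℝ) := Nat.cast_le.mpr (le_trans (le_max_left _ _) hn)
    linarith
  calc d (w n) x ≤ d (w n) (u n) + d (u n) x := hd.2.2.2 _ _ _
    _ < 1 / (n + 1) + ε / 2 := by
        exact add_lt_add_of_lt_of_le (hwlt n) (le_of_lt (hN2 n (le_trans (le_max_right _ _) hn)))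
    _ ≤ 1 / (N1 + 1) + ε / 2 := by linarith
    _ < ε / 2 + ε / 2 := by linarith
    _ = ε := by ring

lemma P_mono_set (E : GES X) (t s : ℝ) {A A' : Set X} (h : A ⊆ A') :
    E.P t s A ⊆ E.P t s A' := by
  rintro x ⟨u, hu, huA, hut⟩
  exact ⟨u, hu, h huA, hut⟩

/-- The shift property: `P(t,s)A = P(t-s,0)A` for autonomous systems. -/
lemma P_shift (E : GES X) (hauto : Autonomous E) (t s : ℝ) (A : Set X) :
    E.P t s A = E.P (t - s) 0 A := by
  ext x
  constructor
  · rintro ⟨u, hu, huA, hut⟩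
    refine ⟨fun r => u (r + s), ?_, by simpa using huA, by simpa using hut⟩
    have := (hauto 0 s u).mp (by rwa [zero_add])
    exact this
  · rintro ⟨v, hv, hvA, hvt⟩
    refine ⟨fun r => v (r - s), ?_, by simpa using hvA, by simpa using hvt⟩
    have h2 : (fun r => (fun r' => v (r' - s)) (r + s)) ∈ E.traj 0 := by
      simpa using hv
    have := (hauto 0 s (fun r => v (r - s))).mpr h2
    rwa [zero_add] at this

/-- Each `Omega d univ t` is sequentially closed. -/
lemma omega_seqClosed (E : GES X) {d : X → X → ℝ} (hd : IsMetric d) (t : ℝ) :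
    SeqClosed d (E.Omega d Set.univ t) := by
  intro x hx
  rw [GES.Omega, Set.mem_iInter₂]
  intro s hs
  have hsub : E.Omega d Set.univ t ⊆ SeqClosure d (⋃ r ∈ Set.Iic s, E.P t r Set.univ) := by
    intro z hz
    rw [GES.Omega, Set.mem_iInter₂] at hz
    exact hz s hs
  exact seqClosed_seqClosure hd _ (seqClosure_mono' d hsub hx)

/-- `Omega dw univ t` attracts all sets (uses weak compactness). -/
lemma omega_attracts (E : GES X) {dw : X → X → ℝ}
    (hcompact : SeqCompactIn dw (Set.univ : Set X)) (hauto : Autonomous E) (t : ℝ) :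
    AttractsAll E dw (E.Omega dw Set.univ t) := by
  by_contra hcon
  unfold AttractsAll at hcon
  push_neg at hcon
  obtain ⟨B, ε, hε, hbad⟩ := hcon
  have hseq : ∀ n : ℕ, ∃ τ ≥ (n : ℝ), ∃ x ∈ E.P τ 0 B,
      ∀ a ∈ E.Omega dw Set.univ t, ε ≤ dw x a := fun n => hbad n
  choose τ hτ x hx hfar using hseq
  obtain ⟨y, -, φ, hφ, hconv⟩ := hcompact x (fun n => Set.mem_univ _)
  have hyΩ : y ∈ E.Omega dw Set.univ t := by
    rw [GES.Omega, Set.mem_iInter₂]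
    intro s hs
    obtain ⟨N, hN⟩ := exists_nat_ge (t - s)
    refine ⟨fun n => x (φ (n + N)), ?_, ?_⟩
    · intro n
      have hτn : t - s ≤ τ (φ (n + N)) := by
        have h1 : (N : ℝ) ≤ (φ (n + N) : ℝ) := by
          exact_mod_cast le_trans (Nat.le_add_left N n) (hφ.le_apply)
        linarith [hτ (φ (n + N))]
      refine Set.mem_biUnion (show t - τ (φ (n + N)) ∈ Set.Iic s by
        simp only [Set.mem_Iic]; linarith) ?_
      have hmem : x (φ (n + N)) ∈ E.P (τ (φ (n + N))) 0 Set.univ :=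
        P_mono_set E _ _ (Set.subset_univ B) (hx _)
      rw [P_shift E hauto t (t - τ (φ (n + N)))]
      simpa using hmem
    · intro δ hδ
      obtain ⟨M, hM⟩ := hconv δ hδ
      exact ⟨M, fun n hn => hM (n + N) (le_trans hn (Nat.le_add_right n N))⟩
  obtain ⟨M, hM⟩ := hconv ε hε
  exact absurd (hM M le_rfl) (not_lt.mpr (hfar (φ M) y hyΩ))

/-- `Omega dw univ t` is minimal among closed attracting sets. -/
lemma omega_minimal (E : GES X) {dw : X → X → ℝ} (hdw : IsMetric dw)
    (hauto : Autonomous E) (t : ℝ) :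
    ∀ B : Set X, SeqClosed dw B → AttractsAll E dw B → E.Omega dw Set.univ t ⊆ B := by
  intro B hBcl hBattr y hy
  apply mem_of_approx hdw hBcl
  intro ε hε
  obtain ⟨t0, ht0⟩ := hBattr Set.univ (ε / 2) (half_pos hε)
  rw [GES.Omega, Set.mem_iInter₂] at hy
  have hs : min t (t - t0) ≤ t := min_le_left _ _
  obtain ⟨u, hu, hc⟩ := hy (min t (t - t0)) hs
  obtain ⟨N, hN⟩ := hc (ε / 2) (half_pos hε)
  obtain ⟨r, hr, hur⟩ := Set.mem_iUnion₂.mp (hu N)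
  have hurP : u N ∈ E.P (t - r) 0 Set.univ := by
    rwa [P_shift E hauto t r] at hur
  have hr' : t0 ≤ t - r := by
    have : r ≤ t - t0 := le_trans hr (min_le_right _ _)
    linarith
  obtain ⟨a, haB, hda⟩ := ht0 (t - r) hr' (u N) hurP
  refine ⟨a, haB, ?_⟩
  calc dw y a ≤ dw y (u N) + dw (u N) a := hdw.2.2.2 _ _ _
    _ = dw (u N) y + dw (u N) a := by rw [hdw.2.2.1]
    _ < ε / 2 + ε / 2 := add_lt_add (hN N le_rfl) hda
    _ = ε := by ring

/-- A global attractor, viewed as a constant family, is pullback attracting. -/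
lemma attracts_to_pb (E : GES X) (hauto : Autonomous E) {d : X → X → ℝ} {A : Set X}
    (hA : AttractsAll E d A) : E.PullbackAttracts d (fun _ => A) Set.univ := by
  intro t ε hε
  obtain ⟨t0, ht0⟩ := hA Set.univ ε hε
  refine ⟨min t (t - t0), min_le_left _ _, fun s hs x hx => ?_⟩
  have hs' : s ≤ t - t0 := le_trans hs (min_le_right _ _)
  rw [P_shift E hauto t s] at hx
  exact ht0 (t - s) (by linarith) x hx

/-- Each member of a pullback attracting family attracts all sets forward. -/
lemma pb_to_attracts (E : GES X) (hauto : Autonomous E) {d : X → X → ℝ} {Afam : ℝ → Set X}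
    (h : E.PullbackAttracts d Afam Set.univ) (t : ℝ) : AttractsAll E d (Afam t) := by
  intro B ε hε
  obtain ⟨s0, hs0t, hs0⟩ := h t ε hε
  refine ⟨t - s0, fun τ hτ x hx => ?_⟩
  have hx' : x ∈ E.P τ 0 Set.univ := P_mono_set E _ _ (Set.subset_univ B) hx
  have hx'' : x ∈ E.P t (t - τ) Set.univ := by
    rw [P_shift E hauto t (t - τ), sub_sub_cancel]
    exact hx'
  exact hs0 (t - τ) (by linarith) x hx''

end Aux

/-- for an autonomous evolutionary system the weak global
attractor and the weak pullback attractor both exist and coincide at every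
time; and the strong global attractor exists iff the strong pullback attractor
exists, in which case they coincide at every time. -/
theorem stmt19 {X : Type*} (E : GES X) (ds dw : X → X → ℝ)
    (hds : IsMetric ds) (hdw : IsMetric dw)
    (hcompact : SeqCompactIn dw (Set.univ : Set X))
    (H : ∀ u v : ℕ → X, DistTendsZero ds u v → DistTendsZero dw u v)
    (hauto : Autonomous E) :
    (∃ Aw : Set X, IsGlobalAttractor E dw Aw) ∧
    E.IsPullbackAttractor dw (fun t => E.Omega dw Set.univ t) ∧
    (∀ Aw : Set X, IsGlobalAttractor E dw Aw → ∀ t : ℝ, Aw = E.Omega dw Set.univ t) ∧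
    ((∃ As : Set X, IsGlobalAttractor E ds As) ↔
      (∃ Afam : ℝ → Set X, E.IsPullbackAttractor ds Afam)) ∧
    (∀ (As : Set X) (Afam : ℝ → Set X), IsGlobalAttractor E ds As →
      E.IsPullbackAttractor ds Afam → ∀ t : ℝ, As = Afam t) := by
  -- each Omega dw univ t is a weak global attractor
  have hΩ : ∀ t : ℝ, IsGlobalAttractor E dw (E.Omega dw Set.univ t) := fun t =>
    ⟨omega_seqClosed E hdw t, omega_attracts E hcompact hauto t,
      omega_minimal E hdw hauto t⟩
  refine ⟨⟨E.Omega dw Set.univ 0, hΩ 0⟩, ?_, ?_, ?_, ?_⟩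
  · -- the Omega family is the weak pullback attractor
    refine ⟨fun t => omega_seqClosed E hdw t, ?_, ?_⟩
    · intro t ε hε
      obtain ⟨t0, ht0⟩ := (hΩ t).2.1 Set.univ ε hε
      refine ⟨min t (t - t0), min_le_left _ _, fun s hs x hx => ?_⟩
      have hs' : s ≤ t - t0 := le_trans hs (min_le_right _ _)
      rw [P_shift E hauto t s] at hx
      exact ht0 (t - s) (by linarith) x hx
    · intro B hBcl hBpb t y hy
      apply mem_of_approx hdw (hBcl t)
      intro ε hε
      obtain ⟨s0, hs0t, hs0⟩ := hBpb t (ε / 2) (half_pos hε)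
      replace hy : y ∈ E.Omega dw Set.univ t := hy
      rw [GES.Omega, Set.mem_iInter₂] at hy
      obtain ⟨u, hu, hc⟩ := hy s0 hs0t
      obtain ⟨N, hN⟩ := hc (ε / 2) (half_pos hε)
      obtain ⟨r, hr, hur⟩ := Set.mem_iUnion₂.mp (hu N)
      obtain ⟨a, haB, hda⟩ := hs0 r hr (u N) hur
      refine ⟨a, haB, ?_⟩
      calc dw y a ≤ dw y (u N) + dw (u N) a := hdw.2.2.2 _ _ _
        _ = dw (u N) y + dw (u N) a := by rw [hdw.2.2.1]
        _ < ε / 2 + ε / 2 := add_lt_add (hN N le_rfl) hda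
        _ = ε := by ring
  · -- uniqueness of the weak global attractor
    intro Aw hAw t
    apply Set.Subset.antisymm
    · exact hAw.2.2 _ (hΩ t).1 (hΩ t).2.1
    · exact omega_minimal E hdw hauto t Aw hAw.1 hAw.2.1
  · -- strong attractor exists iff strong pullback attractor exists
    constructor
    · rintro ⟨As, hAs⟩
      refine ⟨fun _ => As, fun _ => hAs.1, attracts_to_pb E hauto hAs.2.1, ?_⟩
      intro B hBcl hBpb t
      exact hAs.2.2 (B t) (hBcl t) (pb_to_attracts E hauto hBpb t)
    · rintro ⟨Afam, hAf⟩
      refine ⟨Afam 0, hAf.1 0, pb_to_attracts E hauto hAf.2.1 0, ?_⟩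
      intro B hBcl hBattr
      exact hAf.2.2 (fun _ => B) (fun _ => hBcl) (attracts_to_pb E hauto hBattr) 0
  · -- coincidence of strong global and pullback attractors
    intro As Afam hAs hAf t
    apply Set.Subset.antisymm
    · exact hAs.2.2 (Afam t) (hAf.1 t) (pb_to_attracts E hauto hAf.2.1 t)
    · exact hAf.2.2 (fun _ => As) (fun _ => hAs.1) (attracts_to_pb E hauto hAs.2.1) t
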